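/- Let X be a nonempty set, G ≤ S_X and F = N_{S_X}(G). Define, for f ∈ F and a rack folder (λ_x : x ∈ X/G), the tuple (λ_x : x ∈ X/G)·f = (κ_x : x ∈ X/G) where κ_x = f⁻¹ (g_y⁻¹ λ_{y g_y⁻¹} g_y) f with y = xf⁻¹ and g_y ∈ G a fixed element with (y g_y⁻¹) g_y = y and y g_y⁻¹ ∈ X/G. Then this defines a group action of F on the set Fol_r(G) of rack folders over G, and this action restricts to actions on the set of quandle folders, the set of rack envelopes, and the set of quandle envelopes over G. -/

import Mathlib

/-- A rack: a binary operation with bijective left translations satisfying the left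
self-distributive law. -/
structure RackStr (X : Type*) where
  op : X → X → X
  bij : ∀ x, Function.Bijective (op x)
  self_distrib : ∀ x y z, op x (op y z) = op (op x y) (op x z)

/-- A quandle: an idempotent rack. -/
structure QuandleStr (X : Type*) extends RackStr X where
  idem : ∀ x, op x x = x

namespace RackStr

variable {X : Type*}

/-- The left translation `L_x : y ↦ x * y`, as a permutation of `X`. -/
noncomputable def L (Q : RackStr X) (x : X) : Equiv.Perm X :=
  Equiv.ofBijective (Q.op x) (Q.bij x)

/-- The left multiplication group `Lmlt(X,*) = ⟨L_x : x ∈ X⟩ ≤ S_X`. -/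
noncomputable def lmlt (Q : RackStr X) : Subgroup (Equiv.Perm X) :=
  Subgroup.closure (Set.range Q.L)

end RackStr

/-- `R` is a complete set of representatives of the orbits of `G ≤ S_X` on `X`:
every `y ∈ X` lies in the orbit of a unique element of `R`. -/
def IsTransversal {X : Type*} (G : Subgroup (Equiv.Perm X)) (R : Set X) : Prop :=
  ∀ y : X, ∃! x : X, x ∈ R ∧ ∃ g ∈ G, g • y = x

/-- The stabilizer `G_x` of `x` in `G`, as a subgroup of `S_X`. -/
def stabIn {X : Type*} (G : Subgroup (Equiv.Perm X)) (x : X) : Subgroup (Equiv.Perm X) :=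
  G ⊓ MulAction.stabilizer (Equiv.Perm X) x

/-- The centralizer `C_G(G_x)` of the stabilizer `G_x` in `G`, as a subgroup of `S_X`. -/
def cgStab {X : Type*} (G : Subgroup (Equiv.Perm X)) (x : X) : Subgroup (Equiv.Perm X) :=
  G ⊓ Subgroup.centralizer (stabIn G x : Set (Equiv.Perm X))

/-- The center `Z(G_x)` of the stabilizer `G_x`, as a subgroup of `S_X`. -/
def zStab {X : Type*} (G : Subgroup (Equiv.Perm X)) (x : X) : Subgroup (Equiv.Perm X) :=
  stabIn G x ⊓ Subgroup.centralizer (stabIn G x : Set (Equiv.Perm X))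

/-- The conjugacy class `a^G = { g⁻¹ a g : g ∈ G }` of `a` under `G`
(written in left-action convention). -/
def conjClassOf {X : Type*} (G : Subgroup (Equiv.Perm X)) (a : Equiv.Perm X) :
    Set (Equiv.Perm X) :=
  {h | ∃ g ∈ G, h = g * a * g⁻¹}

/-- A rack folder over `G`: a tuple `(λ_x : x ∈ R)` with `λ_x ∈ C_G(G_x)`. -/
def IsRackFolder {X : Type*} (G : Subgroup (Equiv.Perm X)) (R : Set X)
    (Λ : R → Equiv.Perm X) : Prop :=
  ∀ x : R, Λ x ∈ cgStab G (x : X)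

/-- A quandle folder over `G`: a tuple `(λ_x : x ∈ R)` with `λ_x ∈ Z(G_x)`. -/
def IsQuandleFolder {X : Type*} (G : Subgroup (Equiv.Perm X)) (R : Set X)
    (Λ : R → Equiv.Perm X) : Prop :=
  ∀ x : R, Λ x ∈ zStab G (x : X)

/-- The envelope condition: `⟨⋃_{x ∈ R} λ_x^G⟩ = G`. -/
def GeneratesG {X : Type*} (G : Subgroup (Equiv.Perm X)) (R : Set X)
    (Λ : R → Equiv.Perm X) : Prop :=
  Subgroup.closure (⋃ x : R, conjClassOf G (Λ x)) = G

/-- The action of `f ∈ N_{S_X}(G)` on tuples `(λ_x : x ∈ R)`: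
`(Λ·f)_x = ((λ_{y g_y⁻¹})^{g_y})^f` with `y = xf⁻¹`, written in left-action convention.
Here `gsel y = g_y ∈ G` is a fixed element with `(y g_y⁻¹) g_y = y` and `y g_y⁻¹ ∈ R`. -/
def folderAct {X : Type*} (R : Set X) (gsel : X → Equiv.Perm X)
    (hgR : ∀ y : X, (gsel y)⁻¹ • y ∈ R)
    (Λ : R → Equiv.Perm X) (f : Equiv.Perm X) : R → Equiv.Perm X :=
  fun x =>
    f * (gsel (f⁻¹ • (x : X)) *
        Λ ⟨(gsel (f⁻¹ • (x : X)))⁻¹ • (f⁻¹ • (x : X)), hgR _⟩ *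
        (gsel (f⁻¹ • (x : X)))⁻¹) * f⁻¹

section Aux

variable {X : Type*} {G : Subgroup (Equiv.Perm X)}

lemma aux_conj_mem_stabIn {f a : Equiv.Perm X} {x : X}
    (hf : f ∈ Subgroup.normalizer (G : Set (Equiv.Perm X))) (ha : a ∈ stabIn G x) :
    f * a * f⁻¹ ∈ stabIn G (f • x) := by
  obtain ⟨haG, haS⟩ := ha
  refine ⟨(Subgroup.mem_normalizer_iff.mp hf a).mp haG, ?_⟩
  have hax : a • x = x := haS
  show (f * a * f⁻¹) • (f • x) = f • x
  simp [mul_smul, hax]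

lemma aux_conj_mem_cent {f a : Equiv.Perm X} {x : X}
    (hf : f ∈ Subgroup.normalizer (G : Set (Equiv.Perm X)))
    (ha : a ∈ Subgroup.centralizer (stabIn G x : Set (Equiv.Perm X))) :
    f * a * f⁻¹ ∈ Subgroup.centralizer (stabIn G (f • x) : Set (Equiv.Perm X)) := by
  rw [Subgroup.mem_centralizer_iff]
  intro b hb
  have hb' : f⁻¹ * b * f ∈ stabIn G x := by
    have := aux_conj_mem_stabIn (G := G) (Subgroup.inv_mem _ hf) (x := f • x) hb
    simpa [inv_smul_smul] using this
  have hcomm := Subgroup.mem_centralizer_iff.mp ha _ hb'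
  have : f * ((f⁻¹ * b * f) * a) * f⁻¹ = f * (a * (f⁻¹ * b * f)) * f⁻¹ := by rw [hcomm]
  calc b * (f * a * f⁻¹) = f * ((f⁻¹ * b * f) * a) * f⁻¹ := by group
    _ = f * (a * (f⁻¹ * b * f)) * f⁻¹ := this
    _ = (f * a * f⁻¹) * b := by group

lemma aux_conj_mem_cgStab {f a : Equiv.Perm X} {x : X}
    (hf : f ∈ Subgroup.normalizer (G : Set (Equiv.Perm X))) (ha : a ∈ cgStab G x) :
    f * a * f⁻¹ ∈ cgStab G (f • x) :=
  ⟨(Subgroup.mem_normalizer_iff.mp hf a).mp ha.1, aux_conj_mem_cent hf ha.2⟩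

lemma aux_conj_mem_zStab {f a : Equiv.Perm X} {x : X}
    (hf : f ∈ Subgroup.normalizer (G : Set (Equiv.Perm X))) (ha : a ∈ zStab G x) :
    f * a * f⁻¹ ∈ zStab G (f • x) :=
  ⟨aux_conj_mem_stabIn hf ha.1, aux_conj_mem_cent hf ha.2⟩

lemma aux_trans_unique {R : Set X} (hR : IsTransversal G R) {z a b : X}
    (ha : a ∈ R) (hb : b ∈ R) (hga : ∃ g ∈ G, g • z = a) (hgb : ∃ g ∈ G, g • z = b) :
    a = b :=
  (hR z).unique ⟨ha, hga⟩ ⟨hb, hgb⟩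

end Aux
section Aux2

variable {X : Type*} {G : Subgroup (Equiv.Perm X)}

lemma aux_rack_act {R : Set X} {gsel : X → Equiv.Perm X}
    (hgG : ∀ y : X, gsel y ∈ G) (hgR : ∀ y : X, (gsel y)⁻¹ • y ∈ R)
    {Λ : R → Equiv.Perm X} (hΛ : IsRackFolder G R Λ)
    {f : Equiv.Perm X} (hf : f ∈ Subgroup.normalizer (G : Set (Equiv.Perm X))) :
    IsRackFolder G R (folderAct R gsel hgR Λ f) := by
  intro x
  set y := f⁻¹ • (x : X) with hy
  set g := gsel y with hg
  have hfg : f * g ∈ Subgroup.normalizer (G : Set (Equiv.Perm X)) := mul_mem hf (Subgroup.le_normalizer (hgG y))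
  have h1 := aux_conj_mem_cgStab hfg (hΛ ⟨g⁻¹ • y, hgR y⟩)
  have h2 : (f * g) • (g⁻¹ • y) = (x : X) := by
    simp [mul_smul, hy]
  rw [h2] at h1
  have h3 : folderAct R gsel hgR Λ f x
      = (f * g) * Λ ⟨g⁻¹ • y, hgR y⟩ * (f * g)⁻¹ := by
    simp only [folderAct, ← hy, ← hg]; group
  rw [h3]; exact h1

lemma aux_quandle_act {R : Set X} {gsel : X → Equiv.Perm X}
    (hgG : ∀ y : X, gsel y ∈ G) (hgR : ∀ y : X, (gsel y)⁻¹ • y ∈ R)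
    {Λ : R → Equiv.Perm X} (hΛ : IsQuandleFolder G R Λ)
    {f : Equiv.Perm X} (hf : f ∈ Subgroup.normalizer (G : Set (Equiv.Perm X))) :
    IsQuandleFolder G R (folderAct R gsel hgR Λ f) := by
  intro x
  set y := f⁻¹ • (x : X) with hy
  set g := gsel y with hg
  have hfg : f * g ∈ Subgroup.normalizer (G : Set (Equiv.Perm X)) := mul_mem hf (Subgroup.le_normalizer (hgG y))
  have h1 := aux_conj_mem_zStab hfg (hΛ ⟨g⁻¹ • y, hgR y⟩)
  have h2 : (f * g) • (g⁻¹ • y) = (x : X) := by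
    simp [mul_smul, hy]
  rw [h2] at h1
  have h3 : folderAct R gsel hgR Λ f x
      = (f * g) * Λ ⟨g⁻¹ • y, hgR y⟩ * (f * g)⁻¹ := by
    simp only [folderAct, ← hy, ← hg]; group
  rw [h3]; exact h1

end Aux2
section Aux3

variable {X : Type*} {G : Subgroup (Equiv.Perm X)}

lemma aux_map_conj_self {f : Equiv.Perm X} (hf : f ∈ Subgroup.normalizer (G : Set (Equiv.Perm X))) :
    G.map (MulAut.conj f).toMonoidHom = G := by
  ext z
  simp only [Subgroup.mem_map, MulEquiv.coe_toMonoidHom, MulAut.conj_apply]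
  constructor
  · rintro ⟨g, hg, rfl⟩
    exact (Subgroup.mem_normalizer_iff.mp hf g).mp hg
  · intro hz
    refine ⟨f⁻¹ * z * f, ?_, by group⟩
    have := (Subgroup.mem_normalizer_iff.mp (Subgroup.inv_mem _ hf) z).mp hz
    simpa using this

lemma aux_gen_act {R : Set X} (hR : IsTransversal G R) {gsel : X → Equiv.Perm X}
    (hgG : ∀ y : X, gsel y ∈ G) (hgR : ∀ y : X, (gsel y)⁻¹ • y ∈ R)
    {Λ : R → Equiv.Perm X} (hgen : GeneratesG G R Λ)
    {f : Equiv.Perm X} (hf : f ∈ Subgroup.normalizer (G : Set (Equiv.Perm X))) :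
    GeneratesG G R (folderAct R gsel hgR Λ f) := by
  have hN := Subgroup.mem_normalizer_iff.mp hf
  have hset : (⋃ x : R, conjClassOf G (folderAct R gsel hgR Λ f x))
      = (MulAut.conj f) '' (⋃ x : R, conjClassOf G (Λ x)) := by
    ext s
    simp only [Set.mem_iUnion, Set.mem_image, conjClassOf, Set.mem_setOf_eq,
      MulAut.conj_apply]
    constructor
    · rintro ⟨x, h, hh, rfl⟩
      refine ⟨(f⁻¹ * h * f * gsel (f⁻¹ • (x : X))) *
          Λ ⟨(gsel (f⁻¹ • (x : X)))⁻¹ • (f⁻¹ • (x : X)), hgR _⟩ *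
          (f⁻¹ * h * f * gsel (f⁻¹ • (x : X)))⁻¹, ⟨_, f⁻¹ * h * f * gsel (f⁻¹ • (x : X)),
          ?_, rfl⟩, ?_⟩
      · have h1 : f⁻¹ * h * f ∈ G := by
          have := (Subgroup.mem_normalizer_iff.mp (Subgroup.inv_mem _ hf) h).mp hh
          simpa using this
        exact mul_mem h1 (hgG _)
      · simp only [folderAct]; group
    · rintro ⟨s, ⟨x', h, hh, rfl⟩, rfl⟩
      obtain ⟨x0, ⟨hx0R, g', hg', hgx0⟩, _⟩ := hR (f • (x' : X))
      set y := f⁻¹ • x0 with hy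
      set g := gsel y with hgdef
      have hidx : (⟨g⁻¹ • y, hgR y⟩ : R) = x' := by
        apply Subtype.ext
        refine aux_trans_unique hR (z := y) (hgR y) x'.2 ⟨g⁻¹, inv_mem (hgG y), rfl⟩
          ⟨f⁻¹ * g'⁻¹ * f, ?_, ?_⟩
        · have := (Subgroup.mem_normalizer_iff.mp (Subgroup.inv_mem _ hf) g'⁻¹).mp (inv_mem hg')
          simpa using this
        · show (f⁻¹ * g'⁻¹ * f) • (f⁻¹ • x0) = (x' : X)
          rw [← hgx0]
          simp [mul_smul]
      refine ⟨⟨x0, hx0R⟩, f * (h * g⁻¹) * f⁻¹, (hN (h * g⁻¹)).mp (mul_mem hh (inv_mem (hgG y))), ?_⟩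
      simp only [folderAct, ← hy, ← hgdef, hidx]
      group
  unfold GeneratesG
  rw [hset, show ((MulAut.conj f) '' (⋃ x : R, conjClassOf G (Λ x)))
      = (MulAut.conj f).toMonoidHom '' (⋃ x : R, conjClassOf G (Λ x)) from rfl,
    ← MonoidHom.map_closure, hgen, aux_map_conj_self hf]

end Aux3
section Aux4

variable {X : Type*} {G : Subgroup (Equiv.Perm X)}

lemma aux_id_act {R : Set X} (hR : IsTransversal G R) {gsel : X → Equiv.Perm X}
    (hgG : ∀ y : X, gsel y ∈ G) (hgR : ∀ y : X, (gsel y)⁻¹ • y ∈ R)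
    {Λ : R → Equiv.Perm X} (hΛ : IsRackFolder G R Λ) :
    folderAct R gsel hgR Λ 1 = Λ := by
  funext x
  simp only [folderAct, inv_one, one_smul, one_mul, mul_one]
  have hst : (gsel (x : X))⁻¹ • (x : X) = (x : X) :=
    aux_trans_unique hR (z := (x : X)) (hgR _) x.2
      ⟨(gsel (x : X))⁻¹, inv_mem (hgG _), rfl⟩ ⟨1, one_mem _, one_smul _ _⟩
  have hidx : (⟨(gsel (x : X))⁻¹ • (x : X), hgR _⟩ : R) = x := Subtype.ext hst
  rw [hidx]
  have hgx : gsel (x : X) • (x : X) = (x : X) := by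
    simpa using (congrArg (fun a => gsel (x : X) • a) hst).symm
  have hcomm := Subgroup.mem_centralizer_iff.mp (hΛ x).2 _ ⟨hgG (x : X), hgx⟩
  rw [hcomm]; group

lemma aux_comp_act {R : Set X} (hR : IsTransversal G R) {gsel : X → Equiv.Perm X}
    (hgG : ∀ y : X, gsel y ∈ G) (hgR : ∀ y : X, (gsel y)⁻¹ • y ∈ R)
    {Λ : R → Equiv.Perm X} (hΛ : IsRackFolder G R Λ)
    {f₁ f₂ : Equiv.Perm X} (_h₁ : f₁ ∈ Subgroup.normalizer (G : Set (Equiv.Perm X))) (h₂ : f₂ ∈ Subgroup.normalizer (G : Set (Equiv.Perm X))) :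
    folderAct R gsel hgR Λ (f₁ * f₂) =
      folderAct R gsel hgR (folderAct R gsel hgR Λ f₂) f₁ := by
  funext x
  have hN₂ := Subgroup.mem_normalizer_iff.mp (Subgroup.inv_mem _ h₂)
  set y := (f₁ * f₂)⁻¹ • (x : X) with hy
  set y₁ := f₁⁻¹ • (x : X) with hy₁
  set g := gsel y with hgdef
  set g₁ := gsel y₁ with hg₁def
  set r₁ := g₁⁻¹ • y₁ with hr₁def
  set y₂ := f₂⁻¹ • r₁ with hy₂def
  set g₂ := gsel y₂ with hg₂def
  have hyy : f₂ • y = y₁ := by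
    rw [hy, hy₁]; simp [mul_inv_rev, mul_smul]
  have hq₁ : f₂⁻¹ * g₁⁻¹ * f₂ ∈ G := by
    simpa using (hN₂ g₁⁻¹).mp (inv_mem (hgG y₁))
  have hq₂ : f₂⁻¹ * g₁ * f₂ ∈ G := by
    simpa using (hN₂ g₁).mp (hgG y₁)
  have hr2 : g₂⁻¹ • y₂ = g⁻¹ • y := by
    refine aux_trans_unique hR (z := y) (hgR y₂) (hgR y)
      ⟨g₂⁻¹ * (f₂⁻¹ * g₁⁻¹ * f₂), mul_mem (inv_mem (hgG y₂)) hq₁, ?_⟩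
      ⟨g⁻¹, inv_mem (hgG y), rfl⟩
    rw [mul_smul, mul_smul, mul_smul, hyy]
  have hcG : g⁻¹ * (f₂⁻¹ * g₁ * f₂) * g₂ ∈ G :=
    mul_mem (mul_mem (inv_mem (hgG y)) hq₂) (hgG y₂)
  have hcr : (g⁻¹ * (f₂⁻¹ * g₁ * f₂) * g₂) • (g⁻¹ • y) = g⁻¹ • y := by
    conv_lhs => rw [← hr2]
    show (g⁻¹ * (f₂⁻¹ * g₁ * f₂) * g₂) • (g₂⁻¹ • (f₂⁻¹ • (g₁⁻¹ • y₁))) = g⁻¹ • y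
    rw [← hyy]
    simp [mul_smul]
  show (f₁ * f₂) * (g * Λ ⟨g⁻¹ • y, hgR y⟩ * g⁻¹) * (f₁ * f₂)⁻¹
      = f₁ * (g₁ * (f₂ * (g₂ * Λ ⟨g₂⁻¹ • y₂, hgR y₂⟩ * g₂⁻¹) * f₂⁻¹) * g₁⁻¹) * f₁⁻¹
  have hidx : (⟨g₂⁻¹ • y₂, hgR y₂⟩ : R) = ⟨g⁻¹ • y, hgR y⟩ := Subtype.ext hr2
  rw [hidx]
  set L := Λ ⟨g⁻¹ • y, hgR y⟩ with hL
  set c := g⁻¹ * (f₂⁻¹ * g₁ * f₂) * g₂ with hc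
  have hcomm := Subgroup.mem_centralizer_iff.mp (hΛ ⟨g⁻¹ • y, hgR y⟩).2 _ ⟨hcG, hcr⟩
  rw [← hL] at hcomm
  have hLfix : c * L * c⁻¹ = L := by rw [hcomm]; group
  calc (f₁ * f₂) * (g * L * g⁻¹) * (f₁ * f₂)⁻¹
      = f₁ * ((f₂ * g) * L * (f₂ * g)⁻¹) * f₁⁻¹ := by group
    _ = f₁ * ((f₂ * g) * (c * L * c⁻¹) * (f₂ * g)⁻¹) * f₁⁻¹ := by rw [hLfix]
    _ = f₁ * (g₁ * (f₂ * (g₂ * L * g₂⁻¹) * f₂⁻¹) * g₁⁻¹) * f₁⁻¹ := by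
        rw [hc]; group

end Aux4
/-- Theorem `Th:Action`(i): the formula above defines a group action of
`F = N_{S_X}(G)` on the set of rack folders over `G`, and this action restricts to the
sets of quandle folders, rack envelopes and quandle envelopes over `G`. -/
theorem normalizer_action_on_folders {X : Type*} [Nonempty X]
    (G : Subgroup (Equiv.Perm X)) (R : Set X) (hR : IsTransversal G R)
    (gsel : X → Equiv.Perm X) (hgG : ∀ y : X, gsel y ∈ G)
    (hgR : ∀ y : X, (gsel y)⁻¹ • y ∈ R) :
    -- the action preserves rack folders
    (∀ Λ : R → Equiv.Perm X, IsRackFolder G R Λ → ∀ f ∈ Subgroup.normalizer (G : Set (Equiv.Perm X)),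
        IsRackFolder G R (folderAct R gsel hgR Λ f)) ∧
    -- the action preserves quandle folders
    (∀ Λ : R → Equiv.Perm X, IsQuandleFolder G R Λ → ∀ f ∈ Subgroup.normalizer (G : Set (Equiv.Perm X)),
        IsQuandleFolder G R (folderAct R gsel hgR Λ f)) ∧
    -- the action preserves rack envelopes
    (∀ Λ : R → Equiv.Perm X, IsRackFolder G R Λ → GeneratesG G R Λ → ∀ f ∈ Subgroup.normalizer (G : Set (Equiv.Perm X)),
        IsRackFolder G R (folderAct R gsel hgR Λ f) ∧
          GeneratesG G R (folderAct R gsel hgR Λ f)) ∧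
    -- the action preserves quandle envelopes
    (∀ Λ : R → Equiv.Perm X, IsQuandleFolder G R Λ → GeneratesG G R Λ → ∀ f ∈ Subgroup.normalizer (G : Set (Equiv.Perm X)),
        IsQuandleFolder G R (folderAct R gsel hgR Λ f) ∧
          GeneratesG G R (folderAct R gsel hgR Λ f)) ∧
    -- identity law on folders
    (∀ Λ : R → Equiv.Perm X, IsRackFolder G R Λ → folderAct R gsel hgR Λ 1 = Λ) ∧
    -- compatibility law on folders
    (∀ Λ : R → Equiv.Perm X, IsRackFolder G R Λ → ∀ f₁ ∈ Subgroup.normalizer (G : Set (Equiv.Perm X)), ∀ f₂ ∈ Subgroup.normalizer (G : Set (Equiv.Perm X)),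
        folderAct R gsel hgR Λ (f₁ * f₂) =
          folderAct R gsel hgR (folderAct R gsel hgR Λ f₂) f₁) := by
  exact ⟨fun Λ hΛ f hf => aux_rack_act hgG hgR hΛ hf,
    fun Λ hΛ f hf => aux_quandle_act hgG hgR hΛ hf,
    fun Λ hΛ hgen f hf => ⟨aux_rack_act hgG hgR hΛ hf, aux_gen_act hR hgG hgR hgen hf⟩,
    fun Λ hΛ hgen f hf => ⟨aux_quandle_act hgG hgR hΛ hf, aux_gen_act hR hgG hgR hgen hf⟩,
    fun Λ hΛ => aux_id_act hR hgG hgR hΛ,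
    fun Λ hΛ f₁ h₁ f₂ h₂ => aux_comp_act hR hgG hgR hΛ h₁ h₂⟩
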